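/- arXiv:1407.7120 — 3 statements merged into one kernel-verified Lean document; each statement's English description precedes it below -/
import Mathlib

section
/- Let m ≥ 2 be an integer, 2m < p ≤ ∞, and let q₁,...,q_m ∈ [p/(p-m), 2] satisfy ∑_{j=1}^m 1/q_j = (mp+p-2m)/(2p). Then for every s ∈ (max_i q_i, 2], the vector (1/q₁,...,1/q_m) lies in the convex hull in ℝ^m of the m vectors v₁,...,v_m, where v_i has coordinate 1/λ_{m,s} in position i and 1/s in all other positions, with λ_{m,s} = 2ps/(mps+ps+2p-2mp-2ms). -/
theorem stmt_9 (m : ℕ) (hm : 2 ≤ m) (p : ℝ) (hp : 2 * m < p)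
    (q : Fin m → ℝ) (hq : ∀ i, p / (p - m) ≤ q i ∧ q i ≤ 2)
    (hsum : ∑ j, 1 / q j = (m * p + p - 2 * m) / (2 * p))
    (s : ℝ) (hs1 : ∀ i, q i < s) (hs2 : s ≤ 2)
    (lam : ℝ) (hlam : lam = 2 * p * s / (m * p * s + p * s + 2 * p - 2 * m * p - 2 * m * s))
    (v : Fin m → Fin m → ℝ) (hv : ∀ i k, v i k = if k = i then 1 / lam else 1 / s) :
    (fun j => 1 / q j) ∈ convexHull ℝ (Set.range v) := by
  have hmpos : (0:ℝ) < m := by positivity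
  have hppos : (0:ℝ) < p := lt_trans (by positivity) hp
  have hpm : (0:ℝ) < p - m := by nlinarith
  have hqpos : ∀ i, 0 < q i := fun i =>
    lt_of_lt_of_le (div_pos hppos hpm) (hq i).1
  have hspos : 0 < s := lt_trans (hqpos ⟨0, by omega⟩) (hs1 ⟨0, by omega⟩)
  have hdi : ∀ i, 0 < 1 / q i - 1 / s := by
    intro i
    have := one_div_lt_one_div_of_lt (hqpos i) (hs1 i)
    linarith
  have hlaminv : 1 / lam = (m * p * s + p * s + 2 * p - 2 * m * p - 2 * m * s) / (2 * p * s) := by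
    rw [hlam, one_div_div]
  have hKey : ∑ i, (1 / q i - 1 / s) = 1 / lam - 1 / s := by
    rw [Finset.sum_sub_distrib, hsum, Finset.sum_const, Finset.card_univ, Fintype.card_fin,
      hlaminv]
    field_simp
    linear_combination (-(2 * p * m)) * mul_inv_cancel₀ hspos.ne'
  have hdpos : 0 < 1 / lam - 1 / s := by
    rw [← hKey]
    apply Finset.sum_pos (fun i _ => hdi i)
    exact ⟨⟨0, by omega⟩, Finset.mem_univ _⟩
  set c : Fin m → ℝ := fun i => (1 / q i - 1 / s) / (1 / lam - 1 / s) with hc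
  have hcnn : ∀ i ∈ Finset.univ, (0:ℝ) ≤ c i := fun i _ =>
    le_of_lt (div_pos (hdi i) hdpos)
  have hcsum : ∑ i, c i = 1 := by
    rw [hc, ← Finset.sum_div, hKey, div_self (ne_of_gt hdpos)]
  have hmem : ∑ i, c i • v i ∈ convexHull ℝ (Set.range v) := by
    exact (convex_convexHull ℝ (Set.range v)).sum_mem hcnn hcsum
      (fun i _ => subset_convexHull ℝ _ (Set.mem_range_self i))
  have heq : (fun j => 1 / q j) = ∑ i, c i • v i := by
    funext j
    have : (∑ i, c i • v i) j = ∑ i, c i * v i j := by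
      simp [Finset.sum_apply]
    rw [this]
    have hterm : ∀ i, c i * v i j
        = c i * (1 / s) + (if j = i then c i * (1 / lam - 1 / s) else 0) := by
      intro i
      rw [hv]
      split_ifs <;> ring
    simp_rw [hterm]
    rw [Finset.sum_add_distrib, ← Finset.sum_mul, hcsum, Finset.sum_ite_eq]
    simp only [Finset.mem_univ, if_true, one_mul, hc]
    rw [div_mul_cancel₀ _ (ne_of_gt hdpos)]
    ring
  rw [heq]
  exact hmem
end

section
/- Let m ≥ 2 be an integer. For all complex m-linear forms T : ℓ_∞^n × ⋯ × ℓ_∞^n → ℂ with the Bohnenblust–Hille constant bound B ≤ ∏_{j=2}^m Γ(2 - 1/j)^{j/(2-2j)}, one has ∏_{j=2}^m Γ(2 - 1/j)^{j/(2-2j)} < m^{(1-γ)/2}, where γ is the Euler–Mascheroni constant. -/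
open Filter Topology Finset Real

lemma aux_log_lb {u : ℝ} (h0 : 0 ≤ u) (h1 : u ≤ 1/4) : u + u^2/2 ≤ -Real.log (1 - u) := by
  have h := Real.abs_log_sub_add_sum_range_le (x := u) (by rw [abs_of_nonneg h0]; linarith) 3
  rw [abs_of_nonneg h0] at h
  simp only [Finset.sum_range_succ, Finset.sum_range_zero] at h
  rw [abs_le] at h
  have hu3 : 0 ≤ u^3 := pow_nonneg h0 3
  have h4 : u^(3+1) = u^3 * u := by ring
  have herr : u^(3+1)/(1-u) ≤ u^3/3 := by
    rw [div_le_div_iff₀ (by linarith) (by norm_num), h4]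
    nlinarith [mul_le_mul_of_nonneg_left h1 hu3]
  have h2 := h.2
  norm_num at h2 herr ⊢
  nlinarith

noncomputable def auxC : ℝ := (∑ k ∈ Finset.range 19, (1/(2+(k:ℝ)))^2) + 1/21

lemma auxC_lb : (0.6437:ℝ) ≤ auxC := by
  rw [auxC]; simp only [Finset.sum_range_succ, Finset.sum_range_zero]; norm_num

lemma aux_tele (n : ℕ) (hn : 19 ≤ n) :
    auxC - 1/((n:ℝ)+3) ≤ ∑ k ∈ Finset.range (n+1), (1/(2+(k:ℝ)))^2 := by
  induction n, hn using Nat.le_induction with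
  | base =>
      rw [auxC]
      simp only [Finset.sum_range_succ, Finset.sum_range_zero]
      norm_num
  | succ n hn ih =>
      rw [Finset.sum_range_succ]
      have key : 1/((n:ℝ)+3) - 1/((n:ℝ)+4) ≤ (1/(2+((n+1:ℕ):ℝ)))^2 := by
        push_cast
        have h3 : (0:ℝ) < (n:ℝ)+3 := by positivity
        have h4 : (0:ℝ) < (n:ℝ)+4 := by positivity
        rw [div_sub_div _ _ (ne_of_gt h3) (ne_of_gt h4), div_pow, div_le_div_iff₀ (by positivity) (by positivity)]
        ring_nf
        nlinarith [sq_nonneg ((n:ℝ)+3)]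
      push_cast at *
      have e : (1:ℝ)/((n:ℝ)+1+3) = 1/((n:ℝ)+4) := by ring_nf
      rw [e]
      linarith

lemma aux_log_gammaSeq (x : ℝ) (hx : 0 < x) (n : ℕ) (hn : 1 ≤ n) :
    Real.log (Real.GammaSeq x n)
      = x * Real.log n + Real.log ((n.factorial : ℝ)) - ∑ k ∈ Finset.range (n+1), Real.log (x + k) := by
  have hn0 : (0:ℝ) < n := by exact_mod_cast hn
  have hprod : ∀ k ∈ Finset.range (n+1), x + (k:ℝ) ≠ 0 := by
    intro k _; positivity
  have hprodpos : (0:ℝ) < ∏ j ∈ Finset.range (n+1), (x + (j:ℝ)) :=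
    Finset.prod_pos (fun k _ => by positivity)
  rw [Real.GammaSeq, Real.log_div (by positivity) (ne_of_gt hprodpos),
    Real.log_mul (by positivity) (by positivity), Real.log_rpow hn0,
    Real.log_prod hprod]

lemma aux_perk (d : ℝ) (h0 : 0 ≤ d) (h1 : d ≤ 1/2) (k : ℕ) :
    d * (1/(2+(k:ℝ))) + d^2/2 * (1/(2+(k:ℝ)))^2 ≤ Real.log (2 + (k:ℝ)) - Real.log (2 - d + k) := by
  have hk : (0:ℝ) ≤ (k:ℝ) := Nat.cast_nonneg k
  set a : ℝ := 2 + (k:ℝ) with ha_def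
  have ha : (2:ℝ) ≤ a := by simp [ha_def, hk]
  have ha0 : (0:ℝ) < a := by linarith
  have hu0 : 0 ≤ d/a := by positivity
  have huq : d/a ≤ 1/4 := by
    rw [div_le_iff₀ ha0]; linarith
  have key := aux_log_lb hu0 huq
  have hrw : 2 - d + (k:ℝ) = a * (1 - d/a) := by
    field_simp
    ring
  have h1u : (0:ℝ) < 1 - d/a := by linarith
  rw [hrw, Real.log_mul (ne_of_gt ha0) (ne_of_gt h1u)]
  have e1 : d * (1/a) + d^2/2 * (1/a)^2 = d/a + (d/a)^2/2 := by ring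
  rw [e1]
  linarith

lemma aux_key (d : ℝ) (h0 : 0 ≤ d) (h1 : d ≤ 1/2) (n : ℕ) (hn : 19 ≤ n) :
    Real.log (Real.GammaSeq 2 n) - d * (Real.log n - ∑ k ∈ Finset.range (n+1), 1/(2+(k:ℝ)))
      + d^2/2 * (auxC - 1/((n:ℝ)+3)) ≤ Real.log (Real.GammaSeq (2-d) n) := by
  have hn1 : 1 ≤ n := by omega
  rw [aux_log_gammaSeq 2 (by norm_num) n hn1, aux_log_gammaSeq (2-d) (by linarith) n hn1]
  have hsum : ∑ k ∈ Finset.range (n+1), (d * (1/(2+(k:ℝ))) + d^2/2 * (1/(2+(k:ℝ)))^2)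
      ≤ ∑ k ∈ Finset.range (n+1), (Real.log (2 + (k:ℝ)) - Real.log (2 - d + k)) :=
    Finset.sum_le_sum (fun k _ => aux_perk d h0 h1 k)
  rw [Finset.sum_add_distrib, ← Finset.mul_sum, ← Finset.mul_sum, Finset.sum_sub_distrib] at hsum
  have htele := aux_tele n hn
  have hd2 : 0 ≤ d^2/2 := by positivity
  have h2 := mul_le_mul_of_nonneg_left htele hd2
  linarith

lemma aux_harm (n : ℕ) : ∑ k ∈ Finset.range (n+1), (1:ℝ)/(2+(k:ℝ)) = (harmonic (n+2) : ℝ) - 1 := by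
  induction n with
  | zero => norm_num [Finset.sum_range_succ, harmonic_succ, harmonic_zero]
  | succ n ih =>
      have hs : (harmonic (n+3) : ℝ) = (harmonic (n+2) : ℝ) + 1/((n:ℝ)+3) := by
        rw [show n+3 = (n+2)+1 from rfl, harmonic_succ]
        push_cast
        ring
      rw [Finset.sum_range_succ, ih, show n+1+2 = n+3 from rfl, hs]
      push_cast
      ring

lemma aux_t3 : Filter.Tendsto (fun n : ℕ => Real.log n - ∑ k ∈ Finset.range (n+1), (1:ℝ)/(2+(k:ℝ)))
    Filter.atTop (𝓝 (1 - Real.eulerMascheroniConstant)) := by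
  have hB : Filter.Tendsto (fun n : ℕ => ((harmonic (n+2) : ℝ) - Real.log ((n:ℝ)+2)))
      Filter.atTop (𝓝 Real.eulerMascheroniConstant) := by
    have := Real.tendsto_harmonic_sub_log.comp (Filter.tendsto_add_atTop_nat 2)
    apply this.congr
    intro n
    simp only [Function.comp_apply]
    push_cast
    ring_nf
  have hC : Filter.Tendsto (fun n : ℕ => Real.log ((n:ℝ)+2) - Real.log n) Filter.atTop (𝓝 0) := by
    have hreal : Filter.Tendsto (fun x : ℝ => Real.log (1 + 2/x)) Filter.atTop (𝓝 0) := by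
      have h2 : Filter.Tendsto (fun x : ℝ => 1 + 2/x) Filter.atTop (𝓝 1) := by
        simpa using (tendsto_const_nhds.div_atTop (tendsto_id (α := ℝ))).const_add (1:ℝ)
      simpa using h2.log (by norm_num)
    have := hreal.comp tendsto_natCast_atTop_atTop (α := ℕ)
    apply this.congr'
    filter_upwards [Filter.eventually_gt_atTop 0] with n hn
    have hn0 : (0:ℝ) < n := by exact_mod_cast hn
    simp only [Function.comp_apply]
    rw [← Real.log_div (by positivity) (ne_of_gt hn0)]
    congr 1
    field_simp
  have : Filter.Tendsto (fun n : ℕ => 1 - (((harmonic (n+2) : ℝ) - Real.log ((n:ℝ)+2))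
      + (Real.log ((n:ℝ)+2) - Real.log n))) Filter.atTop (𝓝 (1 - (Real.eulerMascheroniConstant + 0))) :=
    (hB.add hC).const_sub 1
  rw [add_zero] at this
  apply this.congr
  intro n
  rw [aux_harm n]
  ring

lemma aux_gamma_lb (d : ℝ) (h0 : 0 ≤ d) (h1 : d ≤ 1/2) :
    (Real.eulerMascheroniConstant - 1) * d + d^2/2 * auxC ≤ Real.log (Real.Gamma (2-d)) := by
  have hGpos : 0 < Real.Gamma (2-d) := Real.Gamma_pos_of_pos (by linarith)
  have tf : Filter.Tendsto (fun n : ℕ => Real.log (Real.GammaSeq (2-d) n)) Filter.atTop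
      (𝓝 (Real.log (Real.Gamma (2-d)))) :=
    ((Real.continuousAt_log hGpos.ne').tendsto).comp (Real.GammaSeq_tendsto_Gamma (2-d))
  have t2 : Filter.Tendsto (fun n : ℕ => Real.log (Real.GammaSeq 2 n)) Filter.atTop (𝓝 0) := by
    have := ((Real.continuousAt_log (by norm_num [Real.Gamma_two] : Real.Gamma 2 ≠ 0)).tendsto).comp
      (Real.GammaSeq_tendsto_Gamma 2)
    simp only [Real.Gamma_two, Real.log_one] at this
    exact this
  have t4 : Filter.Tendsto (fun n : ℕ => 1/((n:ℝ)+3)) Filter.atTop (𝓝 0) := by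
    have h := (tendsto_one_div_atTop_nhds_zero_nat (𝕜 := ℝ)).comp (Filter.tendsto_add_atTop_nat 3)
    apply h.congr
    intro n
    simp only [Function.comp_apply]
    push_cast
    ring
  have tg : Filter.Tendsto (fun n : ℕ =>
      Real.log (Real.GammaSeq 2 n) - d * (Real.log n - ∑ k ∈ Finset.range (n+1), 1/(2+(k:ℝ)))
        + d^2/2 * (auxC - 1/((n:ℝ)+3))) Filter.atTop
      (𝓝 (0 - d * (1 - Real.eulerMascheroniConstant) + d^2/2 * (auxC - 0))) :=
    ((t2.sub (aux_t3.const_mul d)).add (((tendsto_const_nhds (x := auxC)).sub t4).const_mul (d^2/2)))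
  have hle := le_of_tendsto_of_tendsto tg tf ?_
  · calc (Real.eulerMascheroniConstant - 1) * d + d^2/2 * auxC
        = 0 - d * (1 - Real.eulerMascheroniConstant) + d^2/2 * (auxC - 0) := by ring
      _ ≤ _ := hle
  · filter_upwards [Filter.eventually_ge_atTop 19] with n hn
    exact aux_key d h0 h1 n hn

lemma aux_factor (j : ℕ) (hj : 2 ≤ j) :
    Real.Gamma (2 - 1/(j:ℝ)) ^ ((j:ℝ)/(2-2*(j:ℝ)))
      ≤ Real.exp ((1-Real.eulerMascheroniConstant)/2 * (1/((j:ℝ)-1))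
          - auxC/4 * (1/((j:ℝ)*((j:ℝ)-1)))) := by
  have hx : (2:ℝ) ≤ (j:ℝ) := by exact_mod_cast hj
  have hx0 : (0:ℝ) < (j:ℝ) := by linarith
  have h0 : 0 ≤ 1/(j:ℝ) := by positivity
  have h1 : 1/(j:ℝ) ≤ 1/2 := by
    rw [div_le_div_iff₀ hx0 (by norm_num)]; linarith
  have hG := aux_gamma_lb (1/(j:ℝ)) h0 h1
  have hGpos : 0 < Real.Gamma (2 - 1/(j:ℝ)) := Real.Gamma_pos_of_pos (by linarith)
  rw [Real.rpow_def_of_pos hGpos, Real.exp_le_exp]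
  have he : (j:ℝ)/(2-2*(j:ℝ)) ≤ 0 := by
    apply div_nonpos_of_nonneg_of_nonpos (by linarith)
    linarith
  have step := mul_le_mul_of_nonpos_right hG he
  refine le_trans step (le_of_eq ?_)
  have hj1 : (j:ℝ) - 1 ≠ 0 := by intro h; nlinarith
  have hj2 : (2:ℝ) - 2*(j:ℝ) ≠ 0 := by intro h; nlinarith
  have hj3 : (1:ℝ) - (j:ℝ) ≠ 0 := by intro h; nlinarith
  field_simp
  ring

lemma aux_sumA (m : ℕ) (hm : 1 ≤ m) :
    ∑ j ∈ Finset.Icc 2 (m+1), 1/((j:ℝ)-1) = (harmonic m : ℝ) := by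
  induction m, hm using Nat.le_induction with
  | base => norm_num [harmonic_succ, harmonic_zero]
  | succ m hm ih =>
      rw [Finset.sum_Icc_succ_top (by omega : 2 ≤ m+1+1), ih, harmonic_succ]
      push_cast
      ring

lemma aux_sumB (m : ℕ) (hm : 1 ≤ m) :
    ∑ j ∈ Finset.Icc 2 (m+1), 1/((j:ℝ)*((j:ℝ)-1)) = 1 - 1/((m:ℝ)+1) := by
  induction m, hm using Nat.le_induction with
  | base => norm_num
  | succ m hm ih =>
      rw [Finset.sum_Icc_succ_top (by omega : 2 ≤ m+1+1), ih]
      have h1 : ((m:ℝ)+1) ≠ 0 := by positivity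
      have h2 : ((m:ℝ)+2) ≠ 0 := by positivity
      push_cast
      field_simp
      ring

lemma aux_log3 : (1.0975:ℝ) < Real.log 3 := by
  have h43 : Real.log (4/3) ≤ 887/3072 := by
    have h := Real.abs_log_sub_add_sum_range_le (x := (1/4:ℝ)) (by rw [abs_of_nonneg]; norm_num; norm_num) 4
    rw [abs_le] at h
    have h2 := h.1
    simp only [Finset.sum_range_succ, Finset.sum_range_zero] at h2
    have e : Real.log (4/3) = - Real.log (1 - 1/4) := by
      rw [show (1:ℝ) - 1/4 = 3/4 by norm_num, ← Real.log_inv]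
      norm_num
    rw [e]
    rw [abs_of_nonneg (by norm_num)] at h2
    norm_num at h2 ⊢
    linarith
  have hlog4 : Real.log 4 = 2 * Real.log 2 := by
    rw [show (4:ℝ) = 2^2 by norm_num, Real.log_pow]
    push_cast; ring
  have e2 : Real.log (4/3) = Real.log 4 - Real.log 3 := Real.log_div (by norm_num) (by norm_num)
  have := Real.log_two_gt_d9
  rw [e2, hlog4] at h43
  linarith

lemma aux_numeric (m : ℕ) (hm : 2 ≤ m) :
    (1 - Real.eulerMascheroniConstant) * ((harmonic (m-1) : ℝ) - Real.log m)
      < auxC/2 * (1 - 1/(m:ℝ)) := by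
  set γ := Real.eulerMascheroniConstant with hγ
  have hγl : 1/2 < γ := Real.one_half_lt_eulerMascheroniConstant
  have hγu : γ < 2/3 := Real.eulerMascheroniConstant_lt_two_thirds
  have hC := auxC_lb
  have hlog2 := Real.log_two_gt_d9
  have hlog2' := Real.log_two_lt_d9
  rcases lt_or_ge m 5 with h5 | h5
  · interval_cases m
    · have hh : (harmonic 1 : ℝ) = 1 := by norm_num [harmonic_succ, harmonic_zero]
      norm_num [hh]
      have key : (1 - γ) * (1 - Real.log 2) < (1/2) * 0.3068528197 :=
        mul_lt_mul'' (by linarith) (by linarith) (by linarith) (by linarith)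
      nlinarith
    · have hh : (harmonic 2 : ℝ) = 3/2 := by norm_num [harmonic_succ, harmonic_zero]
      norm_num [hh]
      have hl3 := aux_log3
      have hlog4 : Real.log 4 = 2 * Real.log 2 := by
        rw [show (4:ℝ) = 2^2 by norm_num, Real.log_pow]
        push_cast; ring
      have h34 : Real.log 3 < Real.log 4 := Real.log_lt_log (by norm_num) (by norm_num)
      have key : (1 - γ) * (3/2 - Real.log 3) < (1/2) * 0.4025 :=
        mul_lt_mul'' (by linarith) (by linarith) (by linarith) (by linarith)
      nlinarith
    · have hh : (harmonic 3 : ℝ) = 11/6 := by norm_num [harmonic_succ, harmonic_zero]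
      have hlog4 : Real.log 4 = 2 * Real.log 2 := by
        rw [show (4:ℝ) = 2^2 by norm_num, Real.log_pow]
        push_cast; ring
      norm_num [hh, hlog4]
      have key : (1 - γ) * (11/6 - 2 * Real.log 2) < (1/2) * 0.4470391 :=
        mul_lt_mul'' (by linarith) (by linarith) (by linarith) (by linarith)
      nlinarith
  · have hseq : (harmonic (m-1) : ℝ) - Real.log m < γ := by
      have h := Real.eulerMascheroniSeq_lt_eulerMascheroniConstant (m-1)
      rw [Real.eulerMascheroniSeq] at h
      have hc : ((m-1 : ℕ) : ℝ) + 1 = (m : ℝ) := by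
        have : 1 ≤ m := by omega
        push_cast [Nat.cast_sub this]
        ring
      rwa [hc] at h
    have h1 : (1 - γ) * ((harmonic (m-1) : ℝ) - Real.log m) ≤ (1 - γ) * γ :=
      mul_le_mul_of_nonneg_left hseq.le (by linarith)
    have h2 : (1 - γ) * γ ≤ 1/4 := by nlinarith [sq_nonneg (γ - 1/2)]
    have h3 : (1:ℝ)/(m:ℝ) ≤ 1/5 := by
      have : (5:ℝ) ≤ (m:ℝ) := by exact_mod_cast h5
      rw [div_le_div_iff₀ (by linarith) (by norm_num)]
      linarith
    have h4 : auxC/2 * (4/5) ≤ auxC/2 * (1 - 1/(m:ℝ)) := by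
      apply mul_le_mul_of_nonneg_left (by linarith) (by linarith)
    nlinarith

theorem stmt_15 (m : ℕ) (hm : 2 ≤ m) :
    ∏ j ∈ Finset.Icc 2 m, Real.Gamma (2 - 1 / j) ^ ((j : ℝ) / (2 - 2 * j)) <
      (m : ℝ) ^ ((1 - Real.eulerMascheroniConstant) / 2) := by
  set γ := Real.eulerMascheroniConstant with hγ
  have hm0 : (0:ℝ) < (m:ℝ) := by
    have : 0 < m := by omega
    exact_mod_cast this
  have h1 : ∏ j ∈ Finset.Icc 2 m, Real.Gamma (2 - 1 / j) ^ ((j : ℝ) / (2 - 2 * j))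
      ≤ ∏ j ∈ Finset.Icc 2 m,
          Real.exp ((1-γ)/2 * (1/((j:ℝ)-1)) - auxC/4 * (1/((j:ℝ)*((j:ℝ)-1)))) := by
    apply Finset.prod_le_prod
    · intro j hj
      have hj2 : 2 ≤ j := (Finset.mem_Icc.mp hj).1
      have hx : (2:ℝ) ≤ (j:ℝ) := by exact_mod_cast hj2
      have : (0:ℝ) < 2 - 1/(j:ℝ) := by
        have : 1/(j:ℝ) ≤ 1/2 := by
          rw [div_le_div_iff₀ (by linarith) (by norm_num)]; linarith
        linarith
      exact Real.rpow_nonneg (Real.Gamma_pos_of_pos this).le _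
    · intro j hj
      exact aux_factor j (Finset.mem_Icc.mp hj).1
  rw [← Real.exp_sum] at h1
  have hsum : ∑ j ∈ Finset.Icc 2 m, ((1-γ)/2 * (1/((j:ℝ)-1)) - auxC/4 * (1/((j:ℝ)*((j:ℝ)-1))))
      = (1-γ)/2 * (harmonic (m-1) : ℝ) - auxC/4 * (1 - 1/(m:ℝ)) := by
    obtain ⟨k, rfl⟩ := Nat.exists_eq_add_of_le hm
    rw [Finset.sum_sub_distrib, ← Finset.mul_sum, ← Finset.mul_sum,
      show 2 + k = (k+1)+1 by omega, aux_sumA (k+1) (by omega), aux_sumB (k+1) (by omega),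
      show (k+1)+1-1 = k+1 from rfl]
    push_cast
    ring
  rw [hsum] at h1
  have hnum := aux_numeric m hm
  have h2 : (1-γ)/2 * (harmonic (m-1):ℝ) - auxC/4 * (1 - 1/(m:ℝ)) < (1-γ)/2 * Real.log m := by
    linarith
  calc ∏ j ∈ Finset.Icc 2 m, Real.Gamma (2 - 1 / j) ^ ((j : ℝ) / (2 - 2 * j))
      ≤ Real.exp ((1-γ)/2 * (harmonic (m-1):ℝ) - auxC/4 * (1 - 1/(m:ℝ))) := h1
    _ < Real.exp ((1-γ)/2 * Real.log m) := Real.exp_lt_exp.mpr h2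
    _ = (m:ℝ) ^ ((1-γ)/2) := by
        rw [Real.rpow_def_of_pos hm0, mul_comm]
end

section
/- Let m ≥ 3 be an integer. Then ∏_{j=2}^m Γ(2 - 1/j)^{j/(2-2j)} < (2/√π)^{m-1}. -/
open Real Set


theorem my_Gamma_two : Real.Gamma 2 = 1 := by
  have := Real.Gamma_add_one (s := 1) one_ne_zero
  simp [this, Real.Gamma_one]

theorem my_Gamma_three : Real.Gamma 3 = 2 := by
  have h := Real.Gamma_nat_eq_factorial 2
  norm_num at h; convert h using 2; norm_num

theorem gamma_lower {x : ℝ} (h1 : 1 < x) (h2 : x < 2) :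
    (2:ℝ) ^ (x - 2) ≤ Real.Gamma x := by
  have hx : (0:ℝ) < x := by linarith
  have h3 : (0:ℝ) < 3 - x := by linarith
  have hconv := Real.convexOn_log_Gamma.2 (mem_Ioi.mpr hx) (mem_Ioi.mpr (by norm_num : (0:ℝ) < 3))
    (show (0:ℝ) ≤ 1/(3-x) by positivity) (show (0:ℝ) ≤ (2-x)/(3-x) by apply div_nonneg <;> linarith)
    (show 1/(3-x) + (2-x)/(3-x) = 1 by field_simp; ring)
  have hpt : (1/(3-x)) • x + ((2-x)/(3-x)) • (3:ℝ) = 2 := by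
    rw [smul_eq_mul, smul_eq_mul, div_mul_eq_mul_div, div_mul_eq_mul_div, ← add_div, div_eq_iff (ne_of_gt h3)]; ring
  rw [hpt] at hconv
  simp only [Function.comp_apply, my_Gamma_two, my_Gamma_three, Real.log_one, smul_eq_mul] at hconv
  -- hconv : 0 ≤ 1/(3-x) * log (Γ x) + (2-x)/(3-x) * log 2
  have hlog : (x - 2) * Real.log 2 ≤ Real.log (Real.Gamma x) := by
    rw [div_mul_eq_mul_div, div_mul_eq_mul_div, ← add_div, le_div_iff₀ h3] at hconv
    nlinarith
  calc (2:ℝ) ^ (x-2) = Real.exp ((x-2) * Real.log 2) := by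
        rw [Real.rpow_def_of_pos (by norm_num), mul_comm]
    _ ≤ Real.exp (Real.log (Real.Gamma x)) := Real.exp_le_exp.mpr hlog
    _ = Real.Gamma x := Real.exp_log (Real.Gamma_pos_of_pos hx)


theorem my_Gamma_32 : Real.Gamma (3/2) = Real.sqrt π / 2 := by
  have := Real.Gamma_add_one (s := 1/2) (by norm_num)
  rw [show (3:ℝ)/2 = 1/2 + 1 by norm_num, this, Real.Gamma_one_half_eq]; ring

theorem gamma_43_upper : Real.Gamma (4/3) ≤ (Real.sqrt π / 2) ^ ((2:ℝ)/3) := by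
  have hconv := Real.convexOn_log_Gamma.2 (mem_Ioi.mpr one_pos)
    (mem_Ioi.mpr (by norm_num : (0:ℝ) < 3/2))
    (show (0:ℝ) ≤ 1/3 by norm_num) (show (0:ℝ) ≤ 2/3 by norm_num)
    (show (1:ℝ)/3 + 2/3 = 1 by norm_num)
  have hpt : ((1:ℝ)/3) • (1:ℝ) + ((2:ℝ)/3) • ((3:ℝ)/2) = 4/3 := by norm_num
  rw [hpt] at hconv
  simp only [Function.comp_apply, Real.Gamma_one, Real.log_one, smul_eq_mul, my_Gamma_32,
    mul_zero, zero_add] at hconv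
  have hpos : 0 < Real.Gamma (4/3) := Real.Gamma_pos_of_pos (by norm_num)
  have hs : 0 < Real.sqrt π / 2 := by positivity
  calc Real.Gamma (4/3) = Real.exp (Real.log (Real.Gamma (4/3))) := (Real.exp_log hpos).symm
    _ ≤ Real.exp (2/3 * Real.log (Real.sqrt π / 2)) := Real.exp_le_exp.mpr hconv
    _ = (Real.sqrt π / 2) ^ ((2:ℝ)/3) := by rw [Real.rpow_def_of_pos hs, mul_comm]

set_option maxHeartbeats 1000000 in
theorem gamma_53_cubed : Real.pi^2 / 16 < Real.Gamma (5/3) ^ 3 := by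
  set p := Real.sqrt π with hp
  have hppos : 0 < p := Real.sqrt_pos.mpr Real.pi_pos
  have hp2 : p ^ 2 = π := Real.sq_sqrt Real.pi_pos.le
  set q : ℝ := (p/2) ^ ((2:ℝ)/3) with hq
  have hqpos : 0 < q := by positivity
  have hq3 : q ^ 3 = π / 4 := by
    rw [hq, ← Real.rpow_natCast ((p/2)^((2:ℝ)/3)) 3, ← Real.rpow_mul (by positivity)]
    rw [show (2:ℝ)/3 * ((3:ℕ):ℝ) = ((2:ℕ):ℝ) by push_cast; norm_num, Real.rpow_natCast, div_pow, hp2]; norm_num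
  have hrefl := Real.Gamma_mul_Gamma_one_sub (1/3)
  have hsin : Real.sin (π * (1/3)) = Real.sqrt 3 / 2 := by
    rw [show π * (1/3) = π/3 by ring, Real.sin_pi_div_three]
  rw [hsin, show (1:ℝ) - 1/3 = 2/3 by norm_num] at hrefl
  set s := Real.sqrt 3 with hs
  have hspos : 0 < s := Real.sqrt_pos.mpr (by norm_num)
  have hs2 : s ^ 2 = 3 := Real.sq_sqrt (by norm_num)
  have hsle : s ≤ 1.8 := by nlinarith [Real.sqrt_nonneg 3]
  have g13pos : 0 < Real.Gamma (1/3) := Real.Gamma_pos_of_pos (by norm_num)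
  have g23pos : 0 < Real.Gamma (2/3) := Real.Gamma_pos_of_pos (by norm_num)
  have g13le : Real.Gamma (1/3) ≤ 3 * q := by
    have h := Real.Gamma_add_one (s := 1/3) (by norm_num)
    rw [show (1:ℝ)/3 + 1 = 4/3 by norm_num] at h
    have := gamma_43_upper
    rw [← hp] at this
    nlinarith [Real.Gamma_pos_of_pos (show (0:ℝ) < 4/3 by norm_num)]
  have g53 : Real.Gamma (5/3) = (2/3) * Real.Gamma (2/3) := by
    have h := Real.Gamma_add_one (s := 2/3) (by norm_num)
    rw [show (2:ℝ)/3 + 1 = 5/3 by norm_num] at h; exact h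
  -- product relation: Γ(1/3)*Γ(2/3) = π/(s/2) = 2π/s
  have hprod : Real.Gamma (1/3) * Real.Gamma (2/3) * s = 2 * π := by
    rw [hrefl, div_div_eq_mul_div, div_mul_cancel₀ _ (ne_of_gt hspos)]
    ring
  -- lower bound for Γ(2/3)
  have g23ge : 2 * π / (3 * q * s) ≤ Real.Gamma (2/3) := by
    rw [div_le_iff₀ (by positivity)]
    nlinarith
  have hpi : 3 < π := by nlinarith [Real.pi_gt_three]
  rw [g53]
  have hcube : (2 * π / (3 * q * s))^3 ≤ Real.Gamma (2/3) ^ 3 := by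
    apply pow_le_pow_left₀ (by positivity) g23ge
  have hnum : π^2/16 < (2/3)^3 * (2 * π / (3 * q * s))^3 := by
    have hs3 : s^3 = 3 * s := by nlinarith
    have hA : (3*q*s)^3 = 81/4 * π * s := by
      have h27 : (3*q*s)^3 = 27 * q^3 * s^3 := by ring
      rw [h27, hq3, hs3]; ring
    have heq : (2/3:ℝ)^3 * (2*π/(3*q*s))^3 = 256*π^2/(2187*s) := by
      rw [div_pow, div_pow, hA]
      rw [div_mul_div_comm, div_eq_div_iff (by positivity) (by positivity)]
      ring
    rw [heq, div_lt_div_iff₀ (by norm_num) (by positivity)]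
    nlinarith [Real.pi_pos]
  calc π^2/16 < (2/3)^3 * (2 * π / (3 * q * s))^3 := hnum
    _ ≤ (2/3)^3 * Real.Gamma (2/3)^3 := by nlinarith [hcube]
    _ = ((2/3) * Real.Gamma (2/3))^3 := by ring



theorem two_sixth_lt : (2:ℝ) ^ ((1:ℝ)/6) < 2 / Real.sqrt π := by
  have hppos : (0:ℝ) < Real.sqrt π := Real.sqrt_pos.mpr Real.pi_pos
  have hb : (0:ℝ) ≤ 2 / Real.sqrt π := by positivity
  refine lt_of_pow_lt_pow_left₀ 6 hb ?_
  have h1 : ((2:ℝ) ^ ((1:ℝ)/6)) ^ (6:ℕ) = 2 := by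
    rw [← Real.rpow_natCast ((2:ℝ)^((1:ℝ)/6)) 6, ← Real.rpow_mul (by norm_num)]
    norm_num
  have hp2 : Real.sqrt π ^ 2 = π := Real.sq_sqrt Real.pi_pos.le
  have h2 : ((2:ℝ) / Real.sqrt π) ^ (6:ℕ) = 64 / π^3 := by
    rw [div_pow]
    congr 1
    · norm_num
    · rw [show (6:ℕ) = 2*3 by norm_num, pow_mul, hp2]
  rw [h1, h2]
  rw [lt_div_iff₀ (by positivity)]
  nlinarith [Real.pi_lt_d2, Real.pi_pos, mul_pos Real.pi_pos Real.pi_pos]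

theorem key3 : Real.Gamma (2 - 1/((3:ℕ):ℝ)) ^ (((3:ℕ):ℝ)/(2-2*((3:ℕ):ℝ))) < 2 / Real.sqrt π := by
  have h53 : (2:ℝ) - 1/((3:ℕ):ℝ) = 5/3 := by norm_num
  have hexp : ((3:ℕ):ℝ)/(2-2*((3:ℕ):ℝ)) = -(3/4) := by norm_num
  rw [h53, hexp]
  have hG : 0 < Real.Gamma (5/3) := Real.Gamma_pos_of_pos (by norm_num)
  have hppos : (0:ℝ) < Real.sqrt π := Real.sqrt_pos.mpr Real.pi_pos
  refine lt_of_pow_lt_pow_left₀ 4 (by positivity) ?_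
  have h1 : (Real.Gamma (5/3) ^ (-(3/4):ℝ)) ^ (4:ℕ) = (Real.Gamma (5/3)^3)⁻¹ := by
    rw [← Real.rpow_natCast (Real.Gamma (5/3) ^ (-(3/4):ℝ)) 4, ← Real.rpow_mul hG.le]
    rw [show (-(3/4):ℝ) * ((4:ℕ):ℝ) = -((3:ℕ):ℝ) by push_cast; norm_num]
    rw [Real.rpow_neg hG.le, Real.rpow_natCast]
  have hp2 : Real.sqrt π ^ 2 = π := Real.sq_sqrt Real.pi_pos.le
  have hp4 : Real.sqrt π ^ (4:ℕ) = π^2 := by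
    rw [show (4:ℕ) = 2*2 from rfl, pow_mul, hp2]
  have h2 : ((2:ℝ) / Real.sqrt π) ^ (4:ℕ) = 16 / π^2 := by
    rw [div_pow, hp4]; norm_num
  rw [h1, h2, inv_eq_one_div, div_lt_div_iff₀ (by positivity) (by positivity)]
  nlinarith [gamma_53_cubed]

theorem key (j : ℕ) (hj : 3 ≤ j) :
    Real.Gamma (2 - 1/(j:ℝ)) ^ ((j:ℝ)/(2-2*(j:ℝ))) < 2 / Real.sqrt π := by
  rcases eq_or_lt_of_le hj with h|h
  · rw [← h]; exact_mod_cast key3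
  · have hj4 : 4 ≤ j := h
    have hjr : (4:ℝ) ≤ (j:ℝ) := by exact_mod_cast hj4
    set x : ℝ := 2 - 1/(j:ℝ) with hx
    have hx1 : 1 < x := by
      have : 1/(j:ℝ) ≤ 1/4 := by
        apply div_le_div_of_nonneg_left (by norm_num) (by norm_num) hjr
      simp only [hx]; linarith
    have hx2 : x < 2 := by
      have : 0 < 1/(j:ℝ) := by positivity
      simp only [hx]; linarith
    have hlow := gamma_lower hx1 hx2
    have ht : (j:ℝ)/(2-2*(j:ℝ)) ≤ 0 := by
      apply div_nonpos_of_nonneg_of_nonpos (by positivity)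
      linarith
    have h2pos : (0:ℝ) < (2:ℝ)^(x-2) := Real.rpow_pos_of_pos (by norm_num) _
    calc Real.Gamma x ^ ((j:ℝ)/(2-2*(j:ℝ)))
        ≤ ((2:ℝ)^(x-2)) ^ ((j:ℝ)/(2-2*(j:ℝ))) :=
          Real.rpow_le_rpow_of_nonpos h2pos hlow ht
      _ = (2:ℝ) ^ ((x-2) * ((j:ℝ)/(2-2*(j:ℝ)))) := by
          rw [← Real.rpow_mul (by norm_num)]
      _ = (2:ℝ) ^ (1/(2*(j:ℝ)-2)) := by
          congr 1
          have hjne : (j:ℝ) ≠ 0 := by positivity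
          have h2j : (2:ℝ) - 2*(j:ℝ) ≠ 0 := by intro hc; nlinarith
          have h2j2 : 2*(j:ℝ) - 2 ≠ 0 := by intro hc; nlinarith
          rw [hx]
          field_simp [hjne, h2j, h2j2]
          ring_nf
          rw [← inv_neg, neg_sub, sub_eq_neg_add]
      _ ≤ (2:ℝ) ^ ((1:ℝ)/6) := by
          apply Real.rpow_le_rpow_of_exponent_le (by norm_num)
          rw [div_le_div_iff₀ (by linarith) (by norm_num)]
          linarith
      _ < 2 / Real.sqrt π := two_sixth_lt



theorem key2 : Real.Gamma (2 - 1/((2:ℕ):ℝ)) ^ (((2:ℕ):ℝ)/(2-2*((2:ℕ):ℝ))) = 2 / Real.sqrt π := by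
  have h1 : (2:ℝ) - 1/((2:ℕ):ℝ) = 3/2 := by norm_num
  have h2 : ((2:ℕ):ℝ)/(2-2*((2:ℕ):ℝ)) = -1 := by norm_num
  rw [h1, h2, my_Gamma_32, Real.rpow_neg_one, inv_div]

theorem stmt_16 (m : ℕ) (hm : 3 ≤ m) :
    ∏ j ∈ Finset.Icc 2 m, Real.Gamma (2 - 1 / j) ^ ((j : ℝ) / (2 - 2 * j)) <
      (2 / Real.sqrt Real.pi) ^ (m - 1) := by
  have hrhs : (2 / Real.sqrt π) ^ (m - 1) = ∏ j ∈ Finset.Icc 2 m, (2 / Real.sqrt π) := by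
    rw [Finset.prod_const, Nat.card_Icc, show m + 1 - 2 = m - 1 by omega]
  rw [hrhs]
  apply Finset.prod_lt_prod
  · intro i hi
    rw [Finset.mem_Icc] at hi
    have h2i : (2:ℝ) ≤ (i:ℝ) := by exact_mod_cast hi.1
    have : (0:ℝ) < 2 - 1/(i:ℝ) := by
      have : 1/(i:ℝ) ≤ 1/2 := by
        apply div_le_div_of_nonneg_left (by norm_num) (by norm_num) h2i
      linarith
    exact Real.rpow_pos_of_pos (Real.Gamma_pos_of_pos this) _
  · intro i hi
    rw [Finset.mem_Icc] at hi
    rcases eq_or_lt_of_le hi.1 with h|h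
    · rw [← h]; exact le_of_eq key2
    · exact le_of_lt (key i h)
  · refine ⟨3, ?_, key 3 le_rfl⟩
    rw [Finset.mem_Icc]
    omega
end
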